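/- In the setting of the 3×3 mutation matrix M with parameters a,...,f ∈ [0,1] (row sums ≤ 1 as appropriate), if the quadratic factor of χ_M has the double root x₁ = x₂ = 1 - s/2 ≠ 1 (i.e., s² = 4p and s ≠ 0), then M^n converges to the matrix whose every row equals (4/s²) · (ce+cf+de, ae+af+bf, ad+bc+bd). -/
import Mathlib


open Matrix Filter Topology

theorem stmt_15 (a b c d e f : ℝ)
    (ha : a ∈ Set.Icc (0:ℝ) 1) (hb : b ∈ Set.Icc (0:ℝ) 1)
    (hc : c ∈ Set.Icc (0:ℝ) 1) (hd : d ∈ Set.Icc (0:ℝ) 1)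
    (he : e ∈ Set.Icc (0:ℝ) 1) (hf : f ∈ Set.Icc (0:ℝ) 1)
    (hab : a + b ≤ 1) (hcd : c + d ≤ 1) (hef : e + f ≤ 1)
    (M : Matrix (Fin 3) (Fin 3) ℝ)
    (hM : M = !![1 - a - b, a, b; c, 1 - c - d, d; e, f, 1 - e - f])
    (s p : ℝ) (hs : s = a + b + c + d + e + f)
    (hp : p = a*d + a*e + a*f + b*c + b*d + b*f + c*e + c*f + d*e)
    (hdisc : s ^ 2 = 4 * p) (hs0 : s ≠ 0) :
    ∀ i j : Fin 3,
      Tendsto (fun n : ℕ => (M ^ n) i j) atTop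
        (𝓝 (((4 / s ^ 2) •
          !![c*e + c*f + d*e, a*e + a*f + b*f, a*d + b*c + b*d;
             c*e + c*f + d*e, a*e + a*f + b*f, a*d + b*c + b*d;
             c*e + c*f + d*e, a*e + a*f + b*f, a*d + b*c + b*d] : Matrix (Fin 3) (Fin 3) ℝ) i j)) := by
  obtain ⟨ha0, ha1⟩ := ha
  obtain ⟨hb0, hb1⟩ := hb
  obtain ⟨hc0, hc1⟩ := hc
  obtain ⟨hd0, hd1⟩ := hd
  obtain ⟨he0, he1⟩ := he
  obtain ⟨hf0, hf1⟩ := hf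
  obtain ⟨V, hV⟩ : ∃ V : Matrix (Fin 3) (Fin 3) ℝ, V =
    !![c*e + c*f + d*e, a*e + a*f + b*f, a*d + b*c + b*d;
       c*e + c*f + d*e, a*e + a*f + b*f, a*d + b*c + b*d;
       c*e + c*f + d*e, a*e + a*f + b*f, a*d + b*c + b*d] := ⟨_, rfl⟩
  obtain ⟨Q, hQ⟩ : ∃ Q : Matrix (Fin 3) (Fin 3) ℝ, Q = (4 / s ^ 2) • V := ⟨_, rfl⟩
  obtain ⟨l, hl⟩ : ∃ l : ℝ, l = 1 - s / 2 := ⟨_, rfl⟩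
  obtain ⟨S, hS⟩ : ∃ S : Matrix (Fin 3) (Fin 3) ℝ,
    S = M - l • 1 - (1 - l) • Q := ⟨_, rfl⟩
  rw [← hV, ← hQ]
  -- basic bounds on s and l
  have hs_pos : 0 < s := by
    rcases lt_or_eq_of_le (by rw [hs]; positivity : (0:ℝ) ≤ s) with h | h
    · exact h
    · exact absurd h.symm hs0
  have hs3 : s ≤ 3 := by rw [hs]; linarith
  have habs : |l| < 1 := by rw [abs_lt, hl]; constructor <;> linarith
  -- Q * M = Q
  have hQM : Q * M = Q := by
    rw [hQ, hM, hV, Matrix.smul_mul]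
    congr 1
    ext i j
    fin_cases i <;> fin_cases j <;>
      simp [Matrix.mul_apply, Fin.sum_univ_three, Matrix.vecHead, Matrix.vecTail] <;> ring
  -- (1-l)^2 • Q = V
  have hlQ : ((1 - l) ^ 2) • Q = V := by
    rw [hQ, smul_smul]
    have h1 : (1 - l) ^ 2 * (4 / s ^ 2) = 1 := by
      rw [hl]; field_simp; ring
    rw [h1, one_smul]
  -- key quadratic identity
  have hM2 : M * M = (2 * l) • M - (l ^ 2) • (1 : Matrix (Fin 3) (Fin 3) ℝ) + V := by
    subst hs hp
    rw [hM, hl, hV]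
    ext i j
    fin_cases i <;> fin_cases j <;>
      simp [Matrix.mul_apply, Fin.sum_univ_three, Matrix.vecHead, Matrix.vecTail, Matrix.one_apply] <;>
      first | ring1 | linear_combination hdisc / 4
  -- S * M = l • S
  have hSM : S * M = l • S := by
    rw [hS, sub_mul, sub_mul, hM2, smul_mul_assoc, one_mul, smul_mul_assoc, hQM, ← hlQ]
    match_scalars <;> ring
  -- M decomposition
  have hM1 : M = Q + l • (1 - Q) + S := by
    rw [hS]; match_scalars <;> ring
  -- closed form for M ^ (n+1)
  have key : ∀ n : ℕ, M ^ (n + 1) =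
      Q + (l ^ (n + 1)) • (1 - Q) + (((n : ℝ) + 1) * l ^ n) • S := by
    intro n
    induction n with
    | zero => simpa using hM1
    | succ n ih =>
      rw [pow_succ, ih, add_mul, add_mul, smul_mul_assoc, smul_mul_assoc, sub_mul, one_mul,
        hQM, hSM]
      rw [hM1]
      match_scalars <;> ring
  intro i j
  have h1 : Tendsto (fun n : ℕ => l ^ n) atTop (𝓝 0) :=
    tendsto_pow_atTop_nhds_zero_of_abs_lt_one habs
  have h2 : Tendsto (fun n : ℕ => ((n : ℝ) + 1) * l ^ n) atTop (𝓝 0) := by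
    have hn : Tendsto (fun n : ℕ => (n : ℝ) ^ 1 * l ^ n) atTop (𝓝 0) :=
      (summable_pow_mul_geometric_of_norm_lt_one 1
        (by rwa [Real.norm_eq_abs] : ‖l‖ < 1)).tendsto_atTop_zero
    have h3 := hn.add h1
    simp only [pow_one] at h3
    simpa [add_mul] using h3
  have hmain : Tendsto (fun n : ℕ => (M ^ (n + 1)) i j) atTop (𝓝 (Q i j)) := by
    simp only [key, Matrix.add_apply, Matrix.smul_apply, smul_eq_mul, pow_succ]
    have h4 : Tendsto (fun n : ℕ => Q i j + l ^ n * l * (1 - Q) i j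
        + ((n : ℝ) + 1) * l ^ n * S i j) atTop (𝓝 (Q i j + 0 * l * (1 - Q) i j + 0 * S i j)) :=
      (tendsto_const_nhds.add (((h1.mul_const l).mul_const _))).add (h2.mul_const _)
    simpa using h4
  exact (tendsto_add_atTop_iff_nat 1).mp hmain
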